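/- Let U ⊆ ℝ^m be open, n ≥ 1, and let ω : U → (ℝ^m →L[ℝ] Matrix (Fin n) (Fin n) ℝ) be a smooth connection 1-form, with parallel transport T^ω. Then T^ω is invariant under reparametrization: for every smooth path γ : ℝ → U, every smooth σ : ℝ → ℝ, and all a, b ∈ ℝ, one has T^ω (γ ∘ σ) a b = T^ω γ (σ a) (σ b). -/

import Mathlib

open Set

attribute [local instance] Matrix.normedAddCommGroup Matrix.normedSpace

theorem linear_ode_unique {E : Type*} [NormedAddCommGroup E] [NormedSpace ℝ E]
    [FiniteDimensional ℝ E]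
    (A : ℝ → (E →L[ℝ] E)) (hA : Continuous A)
    (f g : ℝ → E)
    (hf : ∀ t, HasDerivAt f (A t (f t)) t)
    (hg : ∀ t, HasDerivAt g (A t (g t)) t)
    (a : ℝ) (heq : f a = g a) (b : ℝ) : f b = g b := by
  set c := min a b - 1 with hc
  set d := max a b + 1 with hd
  have hac : c < a := by rw [hc]; linarith [min_le_left a b]
  have had : a < d := by rw [hd]; linarith [le_max_left a b]
  have hbI : b ∈ Icc c d := by
    constructor
    · rw [hc]; linarith [min_le_right a b]
    · rw [hd]; linarith [le_max_right a b]
  obtain ⟨C, hC⟩ := (isCompact_Icc (a := c) (b := d)).exists_bound_of_continuousOn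
    hA.continuousOn
  set K : NNReal := C.toNNReal with hK
  set v : ℝ → E → E := fun t y => if t ∈ Icc c d then A t y else 0 with hv
  have hlip : ∀ t, LipschitzOnWith K (v t) univ := by
    intro t
    by_cases ht : t ∈ Icc c d
    · have h1 : LipschitzWith ‖A t‖₊ (A t) := (A t).lipschitz
      have h2 : (‖A t‖₊ : NNReal) ≤ K := by
        rw [hK, ← norm_toNNReal]
        exact Real.toNNReal_mono (hC t ht)
      have h3 := h1.weaken h2
      have he : v t = A t := by funext y; simp only [hv, if_pos ht]
      rw [he]
      exact h3.lipschitzOnWith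
    · have h1 : LipschitzWith 0 (fun _ : E => (0 : E)) := LipschitzWith.const 0
      have he : v t = fun _ : E => (0 : E) := by funext y; simp only [hv, if_neg ht]
      rw [he]
      exact (h1.weaken (zero_le : (0 : NNReal) ≤ K)).lipschitzOnWith
  have key := ODE_solution_unique_of_mem_Icc (v := v) (s := fun _ => univ) (K := K)
    (fun t _ => hlip t) ⟨hac, had⟩
    (fun t _ => (hf t).continuousAt.continuousWithinAt)
    (fun t ht => by
      have : v t (f t) = A t (f t) := by simp only [hv, if_pos (mem_Icc_of_Ioo ht)]
      rw [this]; exact hf t)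
    (fun _ _ => mem_univ _)
    (fun t _ => (hg t).continuousAt.continuousWithinAt)
    (fun t ht => by
      have : v t (g t) = A t (g t) := by simp only [hv, if_pos (mem_Icc_of_Ioo ht)]
      rw [this]; exact hg t)
    (fun _ _ => mem_univ _)
    heq
  exact key hbI

/-- The parallel transport `T^ω` of a smooth connection 1-form `ω` on the trivial rank-`n`
bundle over an open set `U ⊆ ℝ^m` (characterized by the defining linear ODE
`T γ a a = 1`, `∂/∂b (T γ a b) = ω (γ b) (γ' b) * T γ a b`) is invariant under smooth
reparametrizations: `T (γ ∘ σ) a b = T γ (σ a) (σ b)`. -/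
theorem parallelTransport_reparam (m n : ℕ) (hn : 1 ≤ n)
    (U : Set (EuclideanSpace ℝ (Fin m))) (hU : IsOpen U)
    (ω : EuclideanSpace ℝ (Fin m) →
      (EuclideanSpace ℝ (Fin m) →L[ℝ] Matrix (Fin n) (Fin n) ℝ))
    (hω : @ContDiffOn ℝ _ _ _ _ _ ContinuousLinearMap.toNormedAddCommGroup
      ContinuousLinearMap.toNormedSpace ⊤ ω U)
    (T : (ℝ → EuclideanSpace ℝ (Fin m)) → ℝ → ℝ → Matrix (Fin n) (Fin n) ℝ)
    (hT : ∀ γ : ℝ → EuclideanSpace ℝ (Fin m), ContDiff ℝ ⊤ γ → (∀ t, γ t ∈ U) →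
      ∀ a : ℝ, T γ a a = 1 ∧
        ∀ t : ℝ, HasDerivAt (T γ a) (ω (γ t) (deriv γ t) * T γ a t) t)
    (γ : ℝ → EuclideanSpace ℝ (Fin m)) (hγ : ContDiff ℝ ⊤ γ) (hγU : ∀ t, γ t ∈ U)
    (σ : ℝ → ℝ) (hσ : ContDiff ℝ ⊤ σ) (a b : ℝ) :
    T (γ ∘ σ) a b = T γ (σ a) (σ b) := by
  -- the reparametrized path
  have hγσ : ContDiff ℝ ⊤ (γ ∘ σ) := hγ.comp hσ
  have hγσU : ∀ t, (γ ∘ σ) t ∈ U := fun t => hγU (σ t)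
  -- left-multiplication as a continuous-linear-map-valued linear map
  set Ψ : (Matrix (Fin n) (Fin n) ℝ) →ₗ[ℝ] ((Matrix (Fin n) (Fin n) ℝ) →L[ℝ] (Matrix (Fin n) (Fin n) ℝ)) :=
    (LinearMap.toContinuousLinearMap :
      ((Matrix (Fin n) (Fin n) ℝ) →ₗ[ℝ] (Matrix (Fin n) (Fin n) ℝ)) ≃ₗ[ℝ] ((Matrix (Fin n) (Fin n) ℝ) →L[ℝ] (Matrix (Fin n) (Fin n) ℝ))).toLinearMap.comp
      (LinearMap.mul ℝ (Matrix (Fin n) (Fin n) ℝ)) with hΨ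
  have hΨapp : ∀ (M y : (Matrix (Fin n) (Fin n) ℝ)), Ψ M y = M * y := by
    intro M y
    simp [hΨ, LinearMap.mul_apply']
  -- the coefficient of the ODE
  set B : ℝ → (Matrix (Fin n) (Fin n) ℝ) := fun t => ω ((γ ∘ σ) t) (deriv (γ ∘ σ) t) with hB
  set A : ℝ → ((Matrix (Fin n) (Fin n) ℝ) →L[ℝ] (Matrix (Fin n) (Fin n) ℝ)) := fun t => Ψ (B t) with hA
  have hAcont : Continuous A := by
    have h1 : Continuous (deriv (γ ∘ σ)) := hγσ.continuous_deriv le_top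
    have h2 : Continuous (fun t => ω ((γ ∘ σ) t)) :=
      hω.continuousOn.comp_continuous hγσ.continuous hγσU
    have h3 : Continuous B := h2.clm_apply h1
    exact (Ψ.continuous_of_finiteDimensional).comp h3
  -- the two solutions
  set f : ℝ → (Matrix (Fin n) (Fin n) ℝ) := fun t => T γ (σ a) (σ t) with hf
  set g : ℝ → (Matrix (Fin n) (Fin n) ℝ) := T (γ ∘ σ) a with hg
  have hTγ := hT γ hγ hγU (σ a)
  have hTγσ := hT (γ ∘ σ) hγσ hγσU a
  have hg' : ∀ t, HasDerivAt g (A t (g t)) t := by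
    intro t
    have h4 : A t (g t) = B t * g t := hΨapp _ _
    rw [h4]
    exact hTγσ.2 t
  have hf' : ∀ t, HasDerivAt f (A t (f t)) t := by
    intro t
    have hσd : HasDerivAt σ (deriv σ t) t := (hσ.differentiable (by simp) t).hasDerivAt
    have hγd : HasDerivAt γ (deriv γ (σ t)) (σ t) :=
      (hγ.differentiable (by simp) (σ t)).hasDerivAt
    have hchain : HasDerivAt (γ ∘ σ) (deriv σ t • deriv γ (σ t)) t :=
      HasDerivAt.scomp t hγd hσd
    have hderiv : deriv (γ ∘ σ) t = deriv σ t • deriv γ (σ t) := hchain.deriv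
    have hstep : HasDerivAt f
        (deriv σ t • (ω (γ (σ t)) (deriv γ (σ t)) * T γ (σ a) (σ t))) t :=
      HasDerivAt.scomp t (hTγ.2 (σ t)) hσd
    have h5 : A t (f t) = deriv σ t • (ω (γ (σ t)) (deriv γ (σ t)) * T γ (σ a) (σ t)) := by
      rw [show A t (f t) = B t * f t from hΨapp _ _, hB]
      simp only [Function.comp_apply, hderiv, map_smul, smul_mul_assoc, hf]
    rw [h5]
    exact hstep
  have heq : g a = f a := by
    show T (γ ∘ σ) a a = T γ (σ a) (σ a)
    rw [hTγσ.1, hTγ.1]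
  exact linear_ode_unique A hAcont g f hg' hf' a heq b
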